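/- Assume μ, σ : [0,T] → ℝ are continuous deterministic functions with ∫_t^T σ_s² ds > 0 for all t < T. For the Gaussian claim X = x + ∫₀^T μ_s ds + ∫₀^T σ_s dW_s, the resilience rate of the dynamic Value-at-Risk at deterministic time t ∈ [0,T) exists and equals lim_{ε→0⁺} (1/ε) E[VaR_{t+ε}^α(X) − VaR_t^α(X)] = (z_α/2) σ_t² / √(∫_t^T σ_s² ds). In particular, it is negative for α ∈ (0,1/2), zero for α = 1/2, and positive for α ∈ (1/2,1). -/

import Mathlib

open MeasureTheory ProbabilityTheory Filter Topology Set
open scoped ENNReal NNReal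

lemma gaussian_iic_zero : gaussianReal 0 1 (Set.Iic (0:ℝ)) = ENNReal.ofReal (1/2) := by
  have hmap : (gaussianReal 0 1).map (fun x => (-1 : ℝ) * x) = gaussianReal 0 1 := by
    rw [ProbabilityTheory.gaussianReal_map_const_mul (-1)]
    have h1 : (⟨(-1:ℝ)^2, sq_nonneg _⟩ : ℝ≥0) * 1 = 1 := by ext; norm_num
    refine congrArg₂ gaussianReal ?_ h1
    norm_num
  have hIci : gaussianReal 0 1 (Set.Iic (0:ℝ)) = gaussianReal 0 1 (Set.Ici (0:ℝ)) := by
    conv_lhs => rw [← hmap]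
    rw [Measure.map_apply (by fun_prop) measurableSet_Iic]
    congr 1
    ext x
    simp only [Set.mem_preimage, Set.mem_Iic, Set.mem_Ici]
    constructor <;> intro <;> linarith
  have hzero : gaussianReal 0 1 ({(0:ℝ)}) = 0 := by
    refine ProbabilityTheory.gaussianReal_absolutelyContinuous 0 (by norm_num) ?_
    simp
  have h1 : gaussianReal 0 1 (Set.Iic (0:ℝ)) + gaussianReal 0 1 (Set.Ioi (0:ℝ)) = 1 := by
    rw [← measure_union (by simp [Set.disjoint_left]) measurableSet_Ioi]
    simp [Set.Iic_union_Ioi]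
  have h2 : gaussianReal 0 1 (Set.Ici (0:ℝ)) = gaussianReal 0 1 (Set.Ioi (0:ℝ)) := by
    have : Set.Ici (0:ℝ) = Set.Ioi 0 ∪ {0} := by
      ext x; simp [le_iff_lt_or_eq, or_comm, eq_comm]
    rw [this, measure_union (Set.disjoint_singleton_right.mpr (by simp)) (measurableSet_singleton 0),
      hzero, add_zero]
  have h3 : gaussianReal 0 1 (Set.Iic (0:ℝ)) + gaussianReal 0 1 (Set.Iic (0:ℝ)) = 1 := by
    nth_rewrite 2 [hIci]
    rw [h2, h1]
  have hfin : gaussianReal 0 1 (Set.Iic (0:ℝ)) ≠ ⊤ := measure_ne_top _ _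
  have : (2 : ℝ≥0∞) * gaussianReal 0 1 (Set.Iic (0:ℝ)) = 1 := by rw [two_mul, h3]
  have h4 : gaussianReal 0 1 (Set.Iic (0:ℝ)) = 1 / 2 :=
    (ENNReal.eq_div_iff (by norm_num) (by norm_num)).mpr this
  rw [h4]
  rw [ENNReal.ofReal_div_of_pos (by norm_num)]
  norm_num

lemma gaussian_iic_strictMono (a b : ℝ) (hab : a < b) :
    gaussianReal 0 1 (Set.Iic a) < gaussianReal 0 1 (Set.Iic b) := by
  have hsplit : Set.Iic b = Set.Iic a ∪ Set.Ioc a b := (Set.Iic_union_Ioc_eq_Iic hab.le).symm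
  have hpos : gaussianReal 0 1 (Set.Ioc a b) ≠ 0 := by
    intro h
    have := ProbabilityTheory.gaussianReal_absolutelyContinuous' 0 (by norm_num) h
    rw [Real.volume_Ioc] at this
    simp only [ENNReal.ofReal_eq_zero] at this
    linarith
  have : gaussianReal 0 1 (Set.Iic b)
      = gaussianReal 0 1 (Set.Iic a) + gaussianReal 0 1 (Set.Ioc a b) := by
    rw [hsplit, measure_union ?_ measurableSet_Ioc]
    rw [Set.disjoint_left]
    intro x hx hx'
    exact absurd hx (by simp at hx' ⊢; linarith [hx'.1])
  rw [this]
  exact ENNReal.lt_add_right (measure_ne_top _ _) hpos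

/-- Resilience rate of the dynamic Value-at-Risk of a Gaussian claim.  With
`E s = E[VaR_s^α(X)] = m - z_α √(∫_s^T σ_r² dr)` (the stochastic-integral part has zero mean),
the resilience rate at `t ∈ [0,T)` exists and equals `(z_α/2) σ_t² / √(∫_t^T σ_r² dr)`;
it is negative for `α ∈ (0,1/2)`, zero for `α = 1/2`, and positive for `α ∈ (1/2,1)`. -/
theorem resilience_stmt8
    (T t : ℝ) (ht : t ∈ Set.Ico 0 T)
    (σ : ℝ → ℝ) (hσ : Continuous σ)
    (hv : ∀ s ∈ Set.Ico 0 T, 0 < ∫ r in s..T, (σ r) ^ 2)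
    (hσt : σ t ≠ 0)
    (α zα : ℝ) (hα : α ∈ Set.Ioo (0:ℝ) 1)
    (hz : gaussianReal 0 1 (Set.Iic zα) = ENNReal.ofReal α)
    (m : ℝ) (E : ℝ → ℝ)
    (hE : ∀ s ∈ Set.Ico 0 T, E s = m - zα * Real.sqrt (∫ r in s..T, (σ r) ^ 2)) :
    Tendsto (fun ε : ℝ => (1 / ε) * (E (t + ε) - E t)) (𝓝[>] (0 : ℝ))
        (𝓝 (zα / 2 * (σ t) ^ 2 / Real.sqrt (∫ r in t..T, (σ r) ^ 2))) ∧
    (α < 1 / 2 → zα / 2 * (σ t) ^ 2 / Real.sqrt (∫ r in t..T, (σ r) ^ 2) < 0) ∧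
    (α = 1 / 2 → zα / 2 * (σ t) ^ 2 / Real.sqrt (∫ r in t..T, (σ r) ^ 2) = 0) ∧
    (1 / 2 < α → 0 < zα / 2 * (σ t) ^ 2 / Real.sqrt (∫ r in t..T, (σ r) ^ 2)) := by
  obtain ⟨ht0, htT⟩ := ht
  set F : ℝ → ℝ := fun s => ∫ r in s..T, (σ r) ^ 2 with hF
  have hFt : 0 < F t := hv t ⟨ht0, htT⟩
  have hsq : 0 < Real.sqrt (F t) := Real.sqrt_pos.mpr hFt
  have hσ2 : Continuous (fun r => (σ r) ^ 2) := hσ.pow 2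
  have hFderiv : HasDerivAt F (-(σ t) ^ 2) t := by
    have := intervalIntegral.integral_hasDerivAt_left
      (hσ2.intervalIntegrable t T)
      hσ2.stronglyMeasurable.stronglyMeasurableAtFilter
      hσ2.continuousAt
    simpa using this
  have hGderiv : HasDerivAt (fun s => m - zα * Real.sqrt (F s))
      (zα / 2 * (σ t) ^ 2 / Real.sqrt (F t)) t := by
    have hs := hFderiv.sqrt (ne_of_gt hFt)
    have := (hs.const_mul zα).const_sub m
    exact this.congr_deriv (by ring)
  have hσt2 : 0 < (σ t) ^ 2 := by positivity
  -- sign of zα facts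
  have hmono := gaussian_iic_strictMono
  have hhalf := gaussian_iic_zero
  refine ⟨?_, ?_, ?_, ?_⟩
  · -- the limit
    have htend := hGderiv.tendsto_slope_zero_right
    refine htend.congr' ?_
    have hmem : Set.Ioo (0:ℝ) (T - t) ∈ 𝓝[>] (0:ℝ) :=
      Ioo_mem_nhdsGT_of_mem ⟨le_refl 0, by linarith⟩
    filter_upwards [hmem] with ε hε
    have h1 : E (t + ε) = m - zα * Real.sqrt (F (t + ε)) :=
      hE (t + ε) ⟨by linarith [hε.1], by linarith [hε.2]⟩
    have h2 : E t = m - zα * Real.sqrt (F t) := hE t ⟨ht0, htT⟩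
    rw [h1, h2]
    simp [smul_eq_mul, one_div]
  · intro hαlt
    have hzneg : zα < 0 := by
      by_contra h
      push_neg at h
      have : gaussianReal 0 1 (Set.Iic (0:ℝ)) ≤ gaussianReal 0 1 (Set.Iic zα) := by
        rcases eq_or_lt_of_le h with h'|h'
        · rw [← h']
        · exact (hmono 0 zα h').le
      rw [hz, hhalf] at this
      have := (ENNReal.ofReal_le_ofReal_iff (by linarith [hα.1])).mp this
      linarith
    have hnum : zα / 2 * (σ t) ^ 2 < 0 :=
      mul_neg_of_neg_of_pos (by linarith) hσt2
    exact div_neg_of_neg_of_pos hnum hsq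
  · intro hαeq
    have : zα = 0 := by
      by_contra h
      rcases lt_or_gt_of_ne h with h' | h'
      · have := hmono zα 0 h'
        rw [hz, hαeq, hhalf] at this
        exact lt_irrefl _ this
      · have := hmono 0 zα h'
        rw [hz, hαeq, hhalf] at this
        exact lt_irrefl _ this
    simp [this]
  · intro hαgt
    have hzpos : 0 < zα := by
      by_contra h
      push_neg at h
      have : gaussianReal 0 1 (Set.Iic zα) ≤ gaussianReal 0 1 (Set.Iic (0:ℝ)) := by
        rcases eq_or_lt_of_le h with h'|h'
        · rw [h']
        · exact (hmono zα 0 h').le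
      rw [hz, hhalf] at this
      have := (ENNReal.ofReal_le_ofReal_iff (by norm_num)).mp this
      linarith
    have hnum : 0 < zα / 2 * (σ t) ^ 2 :=
      mul_pos (by linarith) hσt2
    exact div_pos hnum hsq
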